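/- Let (X,μ,F) be a nonsingular E-branching system for a countable directed graph E with infinitely many edges e_1, e_2, …, and let φ ∈ L²(X,μ) be real-valued with support in ⋃_{i=1}^∞ R_{e_i}. Then Σ_{i=1}^N (π(S_{e_i})* φ)² converges in L¹(X,μ) norm to P_F(φ²) as N → ∞. -/

import Mathlib

open MeasureTheory Set Filter
open scoped ENNReal symmDiff

/-- In a nonsingular E-branching system `(X, μ, F)` whose graph has infinitely
many edges `e_1, e_2, …`, if `φ ∈ L²(X,μ)` is real valued with support in `⋃_{i=1}^∞ R_{e_i}`,
then `Σ_{i=1}^N (π(S_{e_i})* φ)²` converges in `L¹(X,μ)` norm to `P_F(φ²)` as `N → ∞`. -/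
theorem stmt12 {X : Type*} [MeasurableSpace X] (μ : Measure X) [SigmaFinite μ]
    {E0 E1 : Type*} [Countable E0] [Countable E1] (r s : E1 → E0)
    (R : E1 → Set X) (D : E0 → Set X)
    (hRmeas : ∀ e, MeasurableSet (R e)) (hDmeas : ∀ v, MeasurableSet (D v))
    (hRdisj : ∀ e d : E1, e ≠ d → μ (R e ∩ R d) = 0)
    (hDdisj : ∀ u v : E0, u ≠ v → μ (D u ∩ D v) = 0)
    (hRD : ∀ e : E1, μ (R e \ D (s e)) = 0)
    (f finv : E1 → X → X) (hf : ∀ e, Measurable (f e)) (hfinv : ∀ e, Measurable (finv e))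
    (hmaps : ∀ e, Set.MapsTo (f e) (D (r e)) (R e))
    (hmapsinv : ∀ e, Set.MapsTo (finv e) (R e) (D (r e)))
    (himage : ∀ e, μ ((f e '' D (r e)) ∆ R e) = 0)
    (hright : ∀ e, ∀ᵐ x ∂μ.restrict (R e), f e (finv e x) = x)
    (hleft : ∀ e, ∀ᵐ x ∂μ.restrict (D (r e)), finv e (f e x) = x)
    -- Φ_{f_e} is the Radon–Nikodym derivative of μ∘f_e with respect to μ on D_{r(e)}:
    (Φ : E1 → X → ℝ) (hΦmeas : ∀ e, Measurable (Φ e)) (hΦnonneg : ∀ e, 0 ≤ Φ e)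
    (hRN : ∀ e, (μ.restrict (R e)).map (finv e)
      = (μ.restrict (D (r e))).withDensity (fun x => ENNReal.ofReal (Φ e x)))
    -- F is a nonsingular map with F = f_e⁻¹ a.e. on R_e:
    (F : X → X) (hFmeas : Measurable F)
    (hFns : ∀ A : Set X, MeasurableSet A → μ A = 0 → μ (F ⁻¹' A) = 0)
    (hF : ∀ e, ∀ᵐ x ∂μ.restrict (R e), F x = finv e x)
    -- P_F is the Perron–Frobenius operator of F on L¹(X,μ):
    (PF : (X → ℝ) → (X → ℝ))
    (hPF : ∀ ψ : X → ℝ, Integrable ψ μ → Integrable (PF ψ) μ ∧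
      ∀ A : Set X, MeasurableSet A → ∫ x in A, PF ψ x ∂μ = ∫ x in F ⁻¹' A, ψ x ∂μ)
    -- the infinitely many edges e_1, e_2, … :
    (e : ℕ → E1) (hinj : Function.Injective e)
    -- φ ∈ L²(X,μ) is real valued with support contained in ⋃_{i=1}^∞ R_{e_i}:
    (φ : X → ℝ) (hφmeas : Measurable φ) (hφL2 : MemLp φ 2 μ)
    (hsupp : ∀ᵐ x ∂μ, x ∉ ⋃ i : ℕ, R (e i) → φ x = 0) :
    Tendsto
      (fun N : ℕ => ∫ x,
        |(∑ i ∈ Finset.range N,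
            ((D (r (e i))).indicator (fun y => Real.sqrt (Φ (e i) y) * φ (f (e i) y)) x) ^ 2)
          - PF (fun y => φ y ^ 2) x| ∂μ)
      atTop (nhds 0) := by
  classical
  set q : X → ℝ := fun x => φ x ^ 2 with hq
  have hqmeas : Measurable q := hφmeas.pow_const 2
  have hqint : Integrable q μ := hφL2.integrable_sq
  have hqnn : ∀ x, 0 ≤ q x := fun x => sq_nonneg _
  set g : ℕ → X → ℝ := fun i => (D (r (e i))).indicator
      (fun y => Real.sqrt (Φ (e i) y) * φ (f (e i) y)) with hg
  have hgmeas : ∀ i, Measurable (g i) := fun i =>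
    (((hΦmeas (e i)).sqrt).mul (hφmeas.comp (hf (e i)))).indicator (hDmeas _)
  -- rewrite the goal in terms of g and q
  have hgoalrw : ∀ (N : ℕ) (x : X),
      (∑ i ∈ Finset.range N,
          ((D (r (e i))).indicator (fun y => Real.sqrt (Φ (e i) y) * φ (f (e i) y)) x) ^ 2)
        = ∑ i ∈ Finset.range N, g i x ^ 2 := by
    intro N x
    refine Finset.sum_congr rfl fun i _ => ?_
    simp only [hg]
  simp only [hgoalrw, ← hq]
  -- the key lintegral identity
  have key : ∀ (i : ℕ) (A : Set X), MeasurableSet A →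
      ∫⁻ x in A, ENNReal.ofReal (g i x ^ 2) ∂μ
        = ∫⁻ x in F ⁻¹' A ∩ R (e i), ENNReal.ofReal (q x) ∂μ := by
    intro i A hA
    have hpt : ∀ x, ENNReal.ofReal (g i x ^ 2)
        = (D (r (e i))).indicator
            (fun y => ENNReal.ofReal (Φ (e i) y) * ENNReal.ofReal (φ (f (e i) y) ^ 2)) x := by
      intro x
      by_cases hx : x ∈ D (r (e i))
      · simp only [hg, Set.indicator_of_mem hx, mul_pow, Real.sq_sqrt (hΦnonneg (e i) x),
          ENNReal.ofReal_mul (hΦnonneg (e i) x)]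
      · simp [hg, Set.indicator_of_notMem hx]
    have hGmeas : Measurable fun x => ENNReal.ofReal (φ (f (e i) x) ^ 2) :=
      ((hφmeas.comp (hf (e i))).pow_const 2).ennreal_ofReal
    calc ∫⁻ x in A, ENNReal.ofReal (g i x ^ 2) ∂μ
        = ∫⁻ x in A, (D (r (e i))).indicator
            (fun y => ENNReal.ofReal (Φ (e i) y) * ENNReal.ofReal (φ (f (e i) y) ^ 2)) x ∂μ :=
          lintegral_congr fun x => hpt x
      _ = ∫⁻ x in D (r (e i)) ∩ A,
            ENNReal.ofReal (Φ (e i) x) * ENNReal.ofReal (φ (f (e i) x) ^ 2) ∂μ := by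
          rw [lintegral_indicator (hDmeas _), Measure.restrict_restrict (hDmeas _)]
      _ = ∫⁻ x in A,
            ENNReal.ofReal (Φ (e i) x) * ENNReal.ofReal (φ (f (e i) x) ^ 2)
              ∂(μ.restrict (D (r (e i)))) := by
          rw [Measure.restrict_restrict hA, Set.inter_comm]
      _ = ∫⁻ x in A, ENNReal.ofReal (φ (f (e i) x) ^ 2)
            ∂((μ.restrict (D (r (e i)))).withDensity (fun x => ENNReal.ofReal (Φ (e i) x))) := by
          rw [setLIntegral_withDensity_eq_setLIntegral_mul _
            ((hΦmeas (e i)).ennreal_ofReal) hGmeas hA]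
          rfl
      _ = ∫⁻ x in A, ENNReal.ofReal (φ (f (e i) x) ^ 2)
            ∂((μ.restrict (R (e i))).map (finv (e i))) := by rw [hRN (e i)]
      _ = ∫⁻ x in finv (e i) ⁻¹' A, ENNReal.ofReal (φ (f (e i) (finv (e i) x)) ^ 2)
            ∂(μ.restrict (R (e i))) := setLIntegral_map hA hGmeas (hfinv (e i))
      _ = ∫⁻ x, (finv (e i) ⁻¹' A).indicator
            (fun x => ENNReal.ofReal (φ (f (e i) (finv (e i) x)) ^ 2)) x
            ∂(μ.restrict (R (e i))) := by
          rw [lintegral_indicator ((hfinv (e i)) hA)]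
      _ = ∫⁻ x, (F ⁻¹' A).indicator (fun x => ENNReal.ofReal (q x)) x
            ∂(μ.restrict (R (e i))) := by
          refine lintegral_congr_ae ?_
          filter_upwards [hright (e i), hF (e i)] with x h1 h2
          simp only [Set.indicator_apply, Set.mem_preimage, h1, h2, hq]
      _ = ∫⁻ x in F ⁻¹' A, ENNReal.ofReal (q x) ∂(μ.restrict (R (e i))) := by
          rw [lintegral_indicator (hFmeas hA)]
      _ = ∫⁻ x in F ⁻¹' A ∩ R (e i), ENNReal.ofReal (q x) ∂μ := by
          rw [Measure.restrict_restrict (hFmeas hA)]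
  -- integrability of each g i ^ 2
  have hgsq_int : ∀ i, Integrable (fun x => g i x ^ 2) μ := by
    intro i
    refine ⟨((hgmeas i).pow_const 2).aestronglyMeasurable, ?_⟩
    rw [hasFiniteIntegral_iff_ofReal (Eventually.of_forall fun x => sq_nonneg _)]
    have h1 : ∫⁻ x, ENNReal.ofReal (g i x ^ 2) ∂μ
        = ∫⁻ x in F ⁻¹' Set.univ ∩ R (e i), ENNReal.ofReal (q x) ∂μ := by
      have := key i Set.univ MeasurableSet.univ
      rwa [Measure.restrict_univ] at this
    rw [h1]
    refine lt_of_le_of_lt (setLIntegral_le_lintegral _ _) ?_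
    rw [← hasFiniteIntegral_iff_ofReal (Eventually.of_forall fun x => hqnn x)]
    exact hqint.2
  -- Bochner version of the key identity
  have keyB : ∀ (i : ℕ) (A : Set X), MeasurableSet A →
      ∫ x in A, g i x ^ 2 ∂μ = ∫ x in F ⁻¹' A ∩ R (e i), q x ∂μ := by
    intro i A hA
    rw [integral_eq_lintegral_of_nonneg_ae (Eventually.of_forall fun x => sq_nonneg _)
        (((hgmeas i).pow_const 2).aestronglyMeasurable),
      integral_eq_lintegral_of_nonneg_ae (Eventually.of_forall fun x => hqnn x)
        (hqmeas.aestronglyMeasurable),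
      key i A hA]
  -- the finite unions
  set UN : ℕ → Set X := fun N => ⋃ i ∈ Finset.range N, R (e i) with hUN
  have hUNmeas : ∀ N, MeasurableSet (UN N) := fun N =>
    (Finset.range N).measurableSet_biUnion fun i _ => hRmeas _
  set U : Set X := ⋃ i : ℕ, R (e i) with hU
  have hUmeas : MeasurableSet U := MeasurableSet.iUnion fun i => hRmeas _
  have hUNsub : ∀ N, UN N ⊆ U := fun N =>
    Set.iUnion₂_subset fun i _ => Set.subset_iUnion (fun i => R (e i)) i
  -- summation over a.e.-disjoint sets
  have hsum : ∀ (A : Set X), MeasurableSet A → ∀ N : ℕ,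
      ∑ i ∈ Finset.range N, ∫ x in A ∩ R (e i), q x ∂μ = ∫ x in A ∩ UN N, q x ∂μ := by
    intro A hA N
    induction N with
    | zero => simp [hUN]
    | succ n ih =>
      have hUNsucc : UN (n + 1) = UN n ∪ R (e n) := by
        rw [hUN]
        simp only [Finset.range_add_one, Finset.set_biUnion_insert]
        exact Set.union_comm _ _
      have hnull : μ (UN n ∩ R (e n)) = 0 := by
        have hsub : UN n ∩ R (e n) ⊆ ⋃ i ∈ Finset.range n, (R (e i) ∩ R (e n)) := by
          rw [hUN, Set.iUnion₂_inter]
      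
        refine measure_mono_null hsub ?_
        refine (measure_biUnion_null_iff (Finset.range n).countable_toSet).2 fun i hi => ?_
        exact hRdisj _ _ fun h => (Finset.mem_range.1 hi).ne (hinj h)
      have hdisj : AEDisjoint μ (A ∩ UN n) (A ∩ R (e n)) := by
        refine measure_mono_null (fun x hx => ?_) hnull
        exact ⟨hx.1.2, hx.2.2⟩
      rw [Finset.sum_range_succ, ih, hUNsucc, Set.inter_union_distrib_left,
        integral_union_ae hdisj ((hA.inter (hRmeas _)).nullMeasurableSet)
          hqint.integrableOn hqint.integrableOn]
  -- cut integrals down to U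
  have hqU : ∀ᵐ x ∂μ, q x = U.indicator q x := by
    filter_upwards [hsupp] with x hx
    by_cases h : x ∈ U
    · simp [Set.indicator_of_mem h]
    · rw [Set.indicator_of_notMem h, hq]
      simp [hx h]
  have hcutU : ∀ S : Set X, MeasurableSet S →
      ∫ x in S, q x ∂μ = ∫ x in S ∩ U, q x ∂μ := by
    intro S hS
    calc ∫ x in S, q x ∂μ = ∫ x in S, U.indicator q x ∂μ :=
          integral_congr_ae (ae_restrict_of_ae hqU)
      _ = ∫ x in S ∩ U, q x ∂μ := setIntegral_indicator hUmeas
  -- properties of PF q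
  have hPFq := hPF q hqint
  have hNint : ∀ N : ℕ, Integrable (fun x => PF q x - ∑ i ∈ Finset.range N, g i x ^ 2) μ :=
    fun N => hPFq.1.sub (integrable_finset_sum _ fun i _ => hgsq_int i)
  -- set integrals of the difference
  have hsetint : ∀ (N : ℕ) (A : Set X), MeasurableSet A →
      ∫ x in A, (PF q x - ∑ i ∈ Finset.range N, g i x ^ 2) ∂μ
        = ∫ x in (F ⁻¹' A ∩ U) \ (F ⁻¹' A ∩ UN N), q x ∂μ := by
    intro N A hA
    rw [integral_sub hPFq.1.integrableOn
      ((integrable_finset_sum _ fun i _ => hgsq_int i).integrableOn),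
      integral_finset_sum _ (fun i _ => (hgsq_int i).integrableOn)]
    have h1 : ∑ i ∈ Finset.range N, ∫ x in A, g i x ^ 2 ∂μ
        = ∫ x in F ⁻¹' A ∩ UN N, q x ∂μ := by
      rw [← hsum (F ⁻¹' A) (hFmeas hA) N]
      exact Finset.sum_congr rfl fun i _ => keyB i A hA
    rw [h1, hPFq.2 A hA, hcutU (F ⁻¹' A) (hFmeas hA),
      integral_diff ((hFmeas hA).inter (hUNmeas N)) hqint.integrableOn
        (Set.inter_subset_inter_right _ (hUNsub N))]
  -- a.e. nonnegativity of the difference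
  have hnn : ∀ N : ℕ, 0 ≤ᵐ[μ] fun x => PF q x - ∑ i ∈ Finset.range N, g i x ^ 2 := by
    intro N
    refine ae_nonneg_of_forall_setIntegral_nonneg (hNint N) fun A hA _ => ?_
    rw [hsetint N A hA]
    exact setIntegral_nonneg (((hFmeas hA).inter hUmeas).diff ((hFmeas hA).inter (hUNmeas N)))
      fun x _ => hqnn x
  -- value of the L¹ norm
  have hval : ∀ N : ℕ, ∫ x, |(∑ i ∈ Finset.range N, g i x ^ 2) - PF q x| ∂μ
      = ∫ x in U, q x ∂μ - ∫ x in UN N, q x ∂μ := by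
    intro N
    have h1 : ∀ᵐ x ∂μ, |(∑ i ∈ Finset.range N, g i x ^ 2) - PF q x|
        = PF q x - ∑ i ∈ Finset.range N, g i x ^ 2 := by
      filter_upwards [hnn N] with x hx
      rw [abs_sub_comm, abs_of_nonneg hx]
    rw [integral_congr_ae h1]
    have h2 := hsetint N Set.univ MeasurableSet.univ
    rw [Measure.restrict_univ] at h2
    rw [h2]
    simp only [Set.preimage_univ, Set.univ_inter]
    exact integral_diff (hUNmeas N) hqint.integrableOn (hUNsub N)
  -- monotone convergence of set integrals
  have hmono : Monotone UN := fun a b hab =>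
    Set.biUnion_subset_biUnion_left (Finset.range_subset_range.2 hab)
  have hUeq : ⋃ N, UN N = U := by
    refine Set.Subset.antisymm (Set.iUnion_subset fun N => hUNsub N) fun x hx => ?_
    obtain ⟨i, hi⟩ := Set.mem_iUnion.1 hx
    exact Set.mem_iUnion.2 ⟨i + 1, Set.mem_biUnion (Finset.self_mem_range_succ i) hi⟩
  have htend : Tendsto (fun N => ∫ x in UN N, q x ∂μ) atTop (nhds (∫ x in U, q x ∂μ)) := by
    have h := tendsto_setIntegral_of_monotone hUNmeas hmono
      (by rw [hUeq]; exact hqint.integrableOn)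
    rwa [hUeq] at h
  have final : Tendsto (fun N => ∫ x in U, q x ∂μ - ∫ x in UN N, q x ∂μ) atTop (nhds 0) := by
    have h := (tendsto_const_nhds (x := ∫ x in U, q x ∂μ) (f := atTop (α := ℕ))).sub htend
    simpa using h
  exact final.congr fun N => (hval N).symm
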